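/- arXiv:1205.4172 — 3 statements merged into one kernel-verified Lean document; each statement's English description precedes it below -/
import Mathlib

section
/- For every integer n ≥ 1 and every real A with 0 < A ≤ n, V(n) ≤ G(π) + (π²/4)·n²·G(A/n) + π²·∫_{A/n}^{π} G(y)/y³ dy. -/
open MeasureTheory Filter Set Topology

/-- Fejér-type kernel: `I_n(y) = sin²(ny/2)/sin²(y/2)` for `y ≠ 0`, `I_n(0) = n²`. -/
noncomputable def fejerKernel (n : ℕ) (y : ℝ) : ℝ :=
  if y = 0 then (n : ℝ) ^ 2 else Real.sin (n * y / 2) ^ 2 / Real.sin (y / 2) ^ 2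

/-- Variance functional `V(n) = ∫_{[0,π]} I_n(y) dμ(y)`. -/
noncomputable def varV (μ : Measure ℝ) (n : ℕ) : ℝ :=
  ∫ y in Icc 0 Real.pi, fejerKernel n y ∂μ

/-- `G(x) = μ([0,x])` for a measure `μ` on `[0,π]`. -/
noncomputable def specG (μ : Measure ℝ) (x : ℝ) : ℝ :=
  (μ (Icc 0 x)).toReal

/-- A function `L : (0,∞) → (0,∞)` is slowly varying at infinity if
`L(λx)/L(x) → 1` as `x → ∞` for every `λ > 0`. -/
def SlowlyVarying (L : ℝ → ℝ) : Prop :=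
  ∀ lam : ℝ, 0 < lam → Tendsto (fun x => L (lam * x) / L x) atTop (𝓝 1)

open Real

lemma poly1 (u c : ℝ) (hu : 0 ≤ u) (hub : u ≤ 0.9216) (hc : 9.869 ≤ c) :
    8 ≤ (4*u+c)*(1-u/4)^2 := by
  nlinarith [mul_nonneg (sub_nonneg.2 hub) hu, mul_nonneg (mul_nonneg (sub_nonneg.2 hub) hu) hu,
    sub_nonneg.2 hub, mul_nonneg (sub_nonneg.2 hub) (sub_nonneg.2 hub)]

lemma key_sin (t : ℝ) (ht : 0 < t) (ht2 : t ≤ π/2) :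
    8 * t^2 ≤ (4*t^2 + π^2) * Real.sin t ^ 2 := by
  have hpi1 : 3.1415 < π := by linarith [pi_gt_d6]
  have hpi2 : π < 3.1416 := by linarith [pi_lt_d6]
  have hpos : (0:ℝ) ≤ 4*t^2 + π^2 := by positivity
  rcases le_or_gt t 0.96 with hc | hc
  · have h1 : t - t^3/4 < Real.sin t := by have := Real.sin_gt_sub_cube ht; nlinarith [pow_pos ht 3]
    have h2 : 0 < t - t^3/4 := by nlinarith
    have h3 : (t - t^3/4)^2 ≤ Real.sin t ^ 2 := by nlinarith
    have hp := poly1 (t^2) (π^2) (sq_nonneg t) (by nlinarith) (by nlinarith)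
    have e1 : 8*t^2 ≤ (4*t^2+π^2)*(t-t^3/4)^2 := by
      have := mul_le_mul_of_nonneg_right hp (sq_nonneg t)
      nlinarith [this]
    calc 8*t^2 ≤ (4*t^2+π^2)*(t-t^3/4)^2 := e1
      _ ≤ (4*t^2+π^2) * Real.sin t ^2 := mul_le_mul_of_nonneg_left h3 hpos
  · have hs0 : (0:ℝ) ≤ π/2 - t := by linarith
    have hsin : Real.sin t = Real.cos (π/2 - t) := (Real.cos_pi_div_two_sub t).symm
    have hcos : 1 - (π/2-t)^2/2 ≤ Real.cos (π/2-t) := Real.one_sub_sq_div_two_le_cos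
    have hsle : π/2 - t ≤ 0.62 := by linarith
    have hp2 : (0:ℝ) ≤ 1 - (π/2-t)^2/2 := by nlinarith
    have h4 : (1 - (π/2-t)^2/2)^2 ≤ Real.cos (π/2-t) ^ 2 := by
      have h5 := mul_le_mul hcos hcos hp2 (le_trans hp2 hcos)
      nlinarith [h5]
    have h3 : 1 - (π/2-t)^2 ≤ Real.sin t ^ 2 := by
      rw [hsin]
      nlinarith [h4, sq_nonneg ((π/2-t)^2)]
    have hkey : (π/2-t) * (4*t^2 + π^2) ≤ 2*(π + 2*t) := by
      nlinarith [mul_nonneg (sub_nonneg.2 hc.le) hs0,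
        mul_nonneg (mul_nonneg (sub_nonneg.2 hc.le) hs0) hs0,
        mul_nonneg (mul_nonneg hs0 hs0) hs0, sq_nonneg (t - 1)]
    have h6 : 8*t^2 ≤ (4*t^2+π^2)*(1-(π/2-t)^2) := by
      nlinarith [mul_nonneg hs0 (sub_nonneg.2 hkey)]
    calc 8*t^2 ≤ (4*t^2+π^2)*(1-(π/2-t)^2) := h6
      _ ≤ (4*t^2+π^2) * Real.sin t ^2 := mul_le_mul_of_nonneg_left h3 hpos


lemma sin_sq_le_sq (y : ℝ) (hy : 0 ≤ y) : Real.sin y ^ 2 ≤ y ^ 2 := by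
  rcases le_or_gt y Real.pi with h | h
  · have h1 : 0 ≤ Real.sin y := Real.sin_nonneg_of_nonneg_of_le_pi hy h
    have h2 : Real.sin y ≤ y := Real.sin_le hy
    nlinarith
  · have h1 : Real.sin y ≤ 1 := Real.sin_le_one y
    have h2 : -1 ≤ Real.sin y := Real.neg_one_le_sin y
    nlinarith [Real.pi_gt_three]

lemma fejer_le (n : ℕ) (x : ℝ) (hx : 0 < x) (hxp : x ≤ Real.pi) :
    fejerKernel n x ≤ Real.sin (n * x / 2) ^ 2 * (1/2 + Real.pi^2/(2*x^2)) := by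
  have hs := key_sin (x/2) (by linarith) (by linarith)
  have hsp : 0 < Real.sin (x/2) := Real.sin_pos_of_pos_of_lt_pi (by linarith)
    (by linarith [Real.pi_gt_three])
  have hsp2 : 0 < Real.sin (x/2) ^ 2 := by positivity
  rw [fejerKernel, if_neg hx.ne', div_le_iff₀ hsp2]
  have h1 : (1:ℝ) ≤ Real.sin (x/2)^2 * (1/2 + Real.pi^2/(2*x^2)) := by
    rw [show (1/2 + Real.pi^2/(2*x^2)) = (4*(x/2)^2 + Real.pi^2)/(8*(x/2)^2) by
      field_simp; ring]
    rw [show Real.sin (x/2)^2 * ((4*(x/2)^2 + Real.pi^2)/(8*(x/2)^2)) =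
      (Real.sin (x/2)^2 * (4*(x/2)^2+Real.pi^2))/(8*(x/2)^2) from by ring,
      le_div_iff₀ (by positivity)]
    nlinarith [hs]
  calc Real.sin (n * x / 2) ^ 2 = Real.sin (n * x / 2) ^ 2 * 1 := by ring
    _ ≤ Real.sin (n * x / 2) ^ 2 * (Real.sin (x/2)^2 * (1/2 + Real.pi^2/(2*x^2))) :=
        mul_le_mul_of_nonneg_left h1 (sq_nonneg _)
    _ = Real.sin (n * x / 2) ^ 2 * (1/2 + Real.pi^2/(2*x^2)) * Real.sin (x/2)^2 := by ring

lemma fejer_tail (n : ℕ) (x : ℝ) (hx : 0 < x) (hxp : x ≤ Real.pi) :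
    fejerKernel n x ≤ 1/2 + Real.pi^2/(2*x^2) := by
  have h := fejer_le n x hx hxp
  have h2 : Real.sin (n * x / 2) ^ 2 ≤ 1 := by
    nlinarith [Real.sin_le_one (n*x/2), Real.neg_one_le_sin (n*x/2)]
  have h3 : (0:ℝ) ≤ 1/2 + Real.pi^2/(2*x^2) := by positivity
  nlinarith [mul_le_mul_of_nonneg_right h2 h3]

lemma fejer_head (n : ℕ) (x : ℝ) (hx0 : 0 ≤ x) (hx1 : x ≤ 1) :
    fejerKernel n x ≤ Real.pi^2 * n^2 / 4 := by
  have hpi : 3 < Real.pi := Real.pi_gt_three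
  rcases eq_or_lt_of_le hx0 with h0 | h0
  · rw [fejerKernel, if_pos h0.symm.symm.symm]
    · have h9 : (9:ℝ) ≤ Real.pi^2 := by nlinarith
      nlinarith [mul_nonneg (sq_nonneg (n:ℝ)) (sub_nonneg.2 h9)]
  · have h := fejer_le n x h0 (by linarith)
    have hsq : Real.sin (n * x / 2) ^ 2 ≤ (n * x / 2)^2 := sin_sq_le_sq _ (by positivity)
    have h3 : (0:ℝ) ≤ 1/2 + Real.pi^2/(2*x^2) := by positivity
    have h4 : Real.sin (n*x/2)^2 * (1/2 + Real.pi^2/(2*x^2)) ≤ (n*x/2)^2 * (1/2 + Real.pi^2/(2*x^2)) :=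
      mul_le_mul_of_nonneg_right hsq h3
    have h5 : (n*x/2)^2 * (1/2 + Real.pi^2/(2*x^2)) = (n:ℝ)^2*x^2/8 + Real.pi^2*n^2/8 := by
      field_simp; ring
    have h6 : (n:ℝ)^2*x^2/8 ≤ Real.pi^2*(n:ℝ)^2/8 := by nlinarith [mul_nonneg (sq_nonneg (n:ℝ)) (show (0:ℝ) ≤ Real.pi^2 - x^2 by nlinarith)]
    linarith


lemma inner_int (a x : ℝ) (ha : 0 < a) (hapi : a ≤ Real.pi) (hx0 : 0 ≤ x) (hxpi : x ≤ Real.pi) :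
    (∫ y in Ioc a Real.pi, (Icc 0 y).indicator (fun _ => (y^3)⁻¹) x ∂volume)
      = 1/(2*(max a x)^2) - 1/(2*Real.pi^2) := by
  have hc0 : 0 < max a x := lt_max_of_lt_left ha
  have hcpi : max a x ≤ Real.pi := max_le hapi hxpi
  have h1 : (∫ y in Ioc a Real.pi, (Icc 0 y).indicator (fun _ => (y^3)⁻¹) x ∂volume)
      = ∫ y in Ioc a Real.pi, (Ici x).indicator (fun y => (y^3)⁻¹) y ∂volume := by
    apply setIntegral_congr_fun measurableSet_Ioc
    intro y hy
    by_cases hxy : x ≤ y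
    · simp [Set.indicator_of_mem, hxy, hx0, Set.mem_Icc, Set.mem_Ici]
    · simp [Set.indicator_of_notMem, hxy, Set.mem_Icc, Set.mem_Ici]
  have h2 : (∫ y in Ioc a Real.pi, (Ici x).indicator (fun y => (y^3)⁻¹) y ∂volume)
      = ∫ y in Ioc (max a x) Real.pi, (y^3)⁻¹ ∂volume := by
    rw [setIntegral_indicator measurableSet_Ici]
    rcases le_or_gt x a with h | h
    · rw [max_eq_left h]
      have hset : Ioc a Real.pi ∩ Ici x = Ioc a Real.pi := by
        apply Set.inter_eq_self_of_subset_left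
        intro y hy
        exact le_trans h (le_of_lt hy.1)
      rw [hset]
    · rw [max_eq_right h.le]
      apply setIntegral_congr_set
      have hset : Ioc a Real.pi ∩ Ici x = Icc x Real.pi := by
        ext y
        simp only [Set.mem_inter_iff, Set.mem_Ioc, Set.mem_Icc, Set.mem_Ici]
        constructor
        · rintro ⟨⟨_, h2'⟩, h3'⟩; exact ⟨h3', h2'⟩
        · rintro ⟨h1', h2'⟩; exact ⟨⟨lt_of_lt_of_le h h1', h2'⟩, h1'⟩
      rw [hset]
      exact (Ioc_ae_eq_Icc).symm
  have h3 : (∫ y in Ioc (max a x) Real.pi, (y^3)⁻¹ ∂volume)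
      = ∫ y in (max a x)..Real.pi, (y:ℝ) ^ (-3 : ℤ) := by
    rw [intervalIntegral.integral_of_le hcpi]
    apply setIntegral_congr_fun measurableSet_Ioc
    intro y hy
    simp only [zpow_neg]
    norm_cast
  rw [h1, h2, h3, integral_zpow]
  · have hπ : (0:ℝ) < Real.pi := Real.pi_pos
    norm_num [zpow_neg]
    generalize hgen : a ⊔ x = c at hc0 ⊢
    have hc' : c ≠ 0 := ne_of_gt hc0
    have hπ' : Real.pi ≠ 0 := ne_of_gt hπ
    field_simp
    norm_cast
    ring
  · right
    refine ⟨by norm_num, ?_⟩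
    intro hmem
    rw [Set.mem_uIcc] at hmem
    rcases hmem with ⟨h1', _⟩ | ⟨h1', _⟩
    · exact absurd h1' (not_le.2 hc0)
    · linarith [Real.pi_pos]


lemma fubini_id (μ : Measure ℝ) [IsFiniteMeasure μ] (a : ℝ) (ha : 0 < a) (hapi : a ≤ Real.pi) :
    (∫ y in a..Real.pi, (μ (Icc 0 y)).toReal / y^3) =
    ∫ x in Icc 0 Real.pi, (1/(2*(max a x)^2) - 1/(2*Real.pi^2)) ∂μ := by
  set F : ℝ → ℝ → ℝ := fun y x => (Icc 0 y).indicator (fun _ => (y^3)⁻¹) x with hF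
  have hswap : (∫ y in Ioc a Real.pi, ∫ x in Icc 0 Real.pi, F y x ∂μ ∂volume)
      = ∫ x in Icc 0 Real.pi, ∫ y in Ioc a Real.pi, F y x ∂volume ∂μ := by
    apply integral_integral_swap
    have hSmeas : MeasurableSet {p : ℝ × ℝ | 0 ≤ p.2 ∧ p.2 ≤ p.1} :=
      (measurableSet_le measurable_const measurable_snd).inter
        (measurableSet_le measurable_snd measurable_fst)
    have hFeq : Function.uncurry F =
        Set.indicator {p : ℝ × ℝ | 0 ≤ p.2 ∧ p.2 ≤ p.1} (fun p => (p.1^3)⁻¹) := by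
      funext p
      simp only [hF, Function.uncurry, Set.indicator_apply, Set.mem_Icc, Set.mem_setOf_eq]
    have hmeas : Measurable (Function.uncurry F) := by
      rw [hFeq]
      exact ((measurable_fst.pow_const 3).inv).indicator hSmeas
    apply Integrable.mono' (g := fun _ => (a^3)⁻¹)
      (integrable_const _) hmeas.aestronglyMeasurable
    rw [Measure.prod_restrict]
    filter_upwards [ae_restrict_mem (measurableSet_Ioc.prod measurableSet_Icc)] with p hp
    obtain ⟨hp1, _⟩ := hp
    have hp1' : a < p.1 := hp1.1
    have hp1pos : (0:ℝ) < p.1 := ha.trans hp1'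
    have hinv : (0:ℝ) < (p.1^3)⁻¹ := inv_pos.2 (pow_pos hp1pos 3)
    have hb1 : ‖Function.uncurry F p‖ ≤ (p.1^3)⁻¹ := by
      rw [hFeq]
      rcases Set.indicator_eq_zero_or_self {p : ℝ × ℝ | 0 ≤ p.2 ∧ p.2 ≤ p.1}
        (fun p => (p.1^3)⁻¹) p with h | h
      · rw [h]; simpa using hinv.le
      · rw [h, Real.norm_eq_abs, abs_of_nonneg hinv.le]
    refine hb1.trans ?_
    have h3 : a^3 ≤ p.1^3 := pow_le_pow_left₀ ha.le hp1'.le 3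
    exact inv_anti₀ (pow_pos ha 3) h3
  have hleft : (∫ y in a..Real.pi, (μ (Icc 0 y)).toReal / y^3)
      = ∫ y in Ioc a Real.pi, ∫ x in Icc 0 Real.pi, F y x ∂μ ∂volume := by
    rw [intervalIntegral.integral_of_le hapi]
    apply setIntegral_congr_fun measurableSet_Ioc
    intro y hy
    have hsub : Icc (0:ℝ) y ⊆ Icc 0 Real.pi := Icc_subset_Icc_right hy.2
    simp only [hF]
    rw [setIntegral_indicator measurableSet_Icc,
      Set.inter_eq_self_of_subset_right hsub, setIntegral_const]
    rw [smul_eq_mul, div_eq_mul_inv]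
    rfl
  have hright : (∫ x in Icc 0 Real.pi, ∫ y in Ioc a Real.pi, F y x ∂volume ∂μ)
      = ∫ x in Icc 0 Real.pi, (1/(2*(max a x)^2) - 1/(2*Real.pi^2)) ∂μ := by
    apply setIntegral_congr_fun measurableSet_Icc
    intro x hx
    exact inner_int a x ha hapi hx.1 hx.2
  rw [hleft, hswap, hright]

/-- Upper bound: for `0 < A ≤ n`,
`V(n) ≤ G(π) + (π²/4) n² G(A/n) + π² ∫_{A/n}^{π} G(y)/y³ dy`. -/
theorem variance_upper_bound (μ : Measure ℝ) [IsFiniteMeasure μ]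
    (hsupp : μ (Icc 0 Real.pi)ᶜ = 0) (n : ℕ) (hn : 1 ≤ n)
    (A : ℝ) (hA : 0 < A) (hAn : A ≤ (n : ℝ)) :
    varV μ n ≤ specG μ Real.pi + Real.pi ^ 2 / 4 * (n : ℝ) ^ 2 * specG μ (A / (n : ℝ)) +
      Real.pi ^ 2 * ∫ y in (A / (n : ℝ))..Real.pi, specG μ y / y ^ 3 := by
  have hpi3 : (3:ℝ) < Real.pi := Real.pi_gt_three
  have hnpos : (0:ℝ) < n := by exact_mod_cast hn
  set a : ℝ := A / n with ha_def
  have ha0 : 0 < a := div_pos hA hnpos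
  have ha1 : a ≤ 1 := (div_le_one hnpos).2 hAn
  have hapi : a ≤ Real.pi := ha1.trans (by linarith)
  -- the comparison function
  set f : ℝ → ℝ := fun x => 1/2 + Real.pi^2/(2*(max a x)^2)
      + (Icc 0 a).indicator (fun _ => Real.pi^2*(n:ℝ)^2/4) x with hf_def
  -- pointwise bound
  have hbound : ∀ x ∈ Icc (0:ℝ) Real.pi, fejerKernel n x ≤ f x := by
    intro x hx
    obtain ⟨hx0, hxpi⟩ := hx
    rcases le_or_gt x a with h | h
    · have h1 : fejerKernel n x ≤ Real.pi^2*(n:ℝ)^2/4 := fejer_head n x hx0 (h.trans ha1)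
      have h2 : (Icc 0 a).indicator (fun _ => Real.pi^2*(n:ℝ)^2/4) x = Real.pi^2*(n:ℝ)^2/4 :=
        Set.indicator_of_mem (Set.mem_Icc.mpr ⟨hx0, h⟩) _
      have h3 : (0:ℝ) ≤ 1/2 + Real.pi^2/(2*(max a x)^2) := by positivity
      simp only [hf_def]
      rw [h2]; linarith
    · have h1 : fejerKernel n x ≤ 1/2 + Real.pi^2/(2*x^2) := fejer_tail n x (ha0.trans h) hxpi
      have h2 : (Icc 0 a).indicator (fun _ => Real.pi^2*(n:ℝ)^2/4) x = 0 :=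
        Set.indicator_of_notMem (fun hc => absurd hc.2 (not_le.2 h)) _
      simp only [hf_def]
      rw [h2, max_eq_right h.le]; linarith
  -- measurability
  have hmax_meas : Measurable fun x : ℝ => 1/2 + Real.pi^2/(2*(max a x)^2) := by
    apply Measurable.add measurable_const
    exact Measurable.div measurable_const
      (((measurable_const.max measurable_id).pow_const 2).const_mul 2)
  have hf_meas : Measurable f := by
    apply hmax_meas.add
    exact Measurable.indicator measurable_const measurableSet_Icc
  have hK_meas : Measurable (fejerKernel n) := by
    have : fejerKernel n = fun y => if y ∈ ({0}:Set ℝ) then ((n:ℝ)^2)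
        else Real.sin (n * y / 2) ^ 2 / Real.sin (y / 2) ^ 2 := by
      funext y; simp [fejerKernel]
    rw [this]
    apply Measurable.ite (measurableSet_singleton 0) measurable_const
    apply Measurable.div
    · exact (Real.measurable_sin.comp ((measurable_id'.const_mul ((n:ℝ))).div_const 2)).pow_const 2
    · exact (Real.measurable_sin.comp (measurable_id'.div_const 2)).pow_const 2
  -- integrabilities
  have hCb : ∀ x : ℝ, ‖f x‖ ≤ 1/2 + Real.pi^2/(2*a^2) + Real.pi^2*(n:ℝ)^2/4 := by
    intro x
    have hmax : a ≤ max a x := le_max_left a x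
    have h1 : Real.pi^2/(2*(max a x)^2) ≤ Real.pi^2/(2*a^2) := by
      apply div_le_div_of_nonneg_left (by positivity) (by positivity)
      nlinarith [le_max_left a x]
    have h2 : (0:ℝ) ≤ (Icc 0 a).indicator (fun _ => Real.pi^2*(n:ℝ)^2/4) x :=
      Set.indicator_nonneg (fun _ _ => by positivity) x
    have h3 : (Icc 0 a).indicator (fun _ => Real.pi^2*(n:ℝ)^2/4) x ≤ Real.pi^2*(n:ℝ)^2/4 :=
      Set.indicator_le_self' (fun _ _ => by positivity) x
    rw [Real.norm_eq_abs, abs_of_nonneg (by simp only [hf_def]; positivity)]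
    simp only [hf_def]; linarith
  have hf_int : IntegrableOn f (Icc 0 Real.pi) μ := by
    apply Integrable.mono' (integrable_const (1/2 + Real.pi^2/(2*a^2) + Real.pi^2*(n:ℝ)^2/4))
      hf_meas.aestronglyMeasurable
    exact ae_of_all _ hCb
  have hK_nonneg : ∀ x, 0 ≤ fejerKernel n x := by
    intro x
    rw [fejerKernel]
    split
    · positivity
    · positivity
  have hK_int : IntegrableOn (fejerKernel n) (Icc 0 Real.pi) μ := by
    apply Integrable.mono' hf_int hK_meas.aestronglyMeasurable
    filter_upwards [ae_restrict_mem measurableSet_Icc] with x hx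
    rw [Real.norm_eq_abs, abs_of_nonneg (hK_nonneg x)]
    exact hbound x hx
  -- main comparison
  have hmono : varV μ n ≤ ∫ x in Icc 0 Real.pi, f x ∂μ :=
    setIntegral_mono_on hK_int hf_int measurableSet_Icc hbound
  -- split ∫ f
  have hg2_meas : Measurable fun x : ℝ => 1/(2*(max a x)^2) - 1/(2*Real.pi^2) := by
    apply Measurable.sub _ measurable_const
    exact Measurable.div measurable_const
      (((measurable_const.max measurable_id).pow_const 2).const_mul 2)
  have hg2_int : IntegrableOn (fun x : ℝ => 1/(2*(max a x)^2) - 1/(2*Real.pi^2))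
      (Icc 0 Real.pi) μ := by
    apply Integrable.mono' (integrable_const (1/(2*a^2)))
      hg2_meas.aestronglyMeasurable
    apply ae_of_all
    intro x
    have h1 : (0:ℝ) < (max a x)^2 := by positivity
    have h2 : a^2 ≤ (max a x)^2 := by nlinarith [le_max_left a x]
    have h3 : 1/(2*(max a x)^2) ≤ 1/(2*a^2) := by
      apply div_le_div_of_nonneg_left (by norm_num) (by positivity)
      linarith
    have h4 : (0:ℝ) ≤ 1/(2*(max a x)^2) := by positivity
    have h5 : (0:ℝ) ≤ 1/(2*Real.pi^2) := by positivity
    have h6 : 1/(2*Real.pi^2) ≤ 1/(2*a^2) := by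
      apply div_le_div_of_nonneg_left (by norm_num) (by positivity)
      nlinarith
    rw [Real.norm_eq_abs, abs_sub_le_iff]
    constructor <;> linarith
  -- integrability of the two pieces of f
  have hg1_meas : Measurable fun x : ℝ => 1/2 + Real.pi^2/(2*(max a x)^2) := hmax_meas
  have hg1_int : IntegrableOn (fun x : ℝ => 1/2 + Real.pi^2/(2*(max a x)^2))
      (Icc 0 Real.pi) μ := by
    apply Integrable.mono' (integrable_const (1/2 + Real.pi^2/(2*a^2)))
      hg1_meas.aestronglyMeasurable
    apply ae_of_all
    intro x
    have h2 : a^2 ≤ (max a x)^2 := by nlinarith [le_max_left a x]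
    have h3 : Real.pi^2/(2*(max a x)^2) ≤ Real.pi^2/(2*a^2) := by
      apply div_le_div_of_nonneg_left (by positivity) (by positivity)
      linarith
    rw [Real.norm_eq_abs, abs_of_nonneg (by positivity)]
    linarith
  have hg3_int : IntegrableOn ((Icc (0:ℝ) a).indicator (fun _ => Real.pi^2*(n:ℝ)^2/4))
      (Icc 0 Real.pi) μ := by
    apply Integrable.mono' (integrable_const (Real.pi^2*(n:ℝ)^2/4))
      (Measurable.indicator measurable_const measurableSet_Icc).aestronglyMeasurable
    apply ae_of_all
    intro x
    rw [Real.norm_eq_abs, abs_of_nonneg (Set.indicator_nonneg (fun _ _ => by positivity) x)]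
    exact Set.indicator_le_self' (fun _ _ => by positivity) x
  -- split the integral of f
  have hsplit : (∫ x in Icc 0 Real.pi, f x ∂μ)
      = (∫ x in Icc 0 Real.pi, (1/2 + Real.pi^2/(2*(max a x)^2)) ∂μ)
        + ∫ x in Icc 0 Real.pi, (Icc (0:ℝ) a).indicator (fun _ => Real.pi^2*(n:ℝ)^2/4) x ∂μ := by
    rw [← integral_add hg1_int hg3_int]
  -- indicator integral
  have hind : (∫ x in Icc 0 Real.pi, (Icc (0:ℝ) a).indicator (fun _ => Real.pi^2*(n:ℝ)^2/4) x ∂μ)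
      = Real.pi^2*(n:ℝ)^2/4 * (μ (Icc 0 a)).toReal := by
    rw [setIntegral_indicator measurableSet_Icc,
      Set.inter_eq_self_of_subset_right (Icc_subset_Icc_right hapi), setIntegral_const,
      smul_eq_mul, mul_comm]
    rfl
  -- relate g1 to g2
  have hg1g2 : (∫ x in Icc 0 Real.pi, (1/2 + Real.pi^2/(2*(max a x)^2)) ∂μ)
      = Real.pi^2 * (∫ x in Icc 0 Real.pi, (1/(2*(max a x)^2) - 1/(2*Real.pi^2)) ∂μ)
        + (μ (Icc 0 Real.pi)).toReal := by
    have heq : ∀ x : ℝ, 1/2 + Real.pi^2/(2*(max a x)^2)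
        = Real.pi^2 * (1/(2*(max a x)^2) - 1/(2*Real.pi^2)) + 1 := by
      intro x
      have hπ : Real.pi ≠ 0 := ne_of_gt Real.pi_pos
      have hm : (max a x) ≠ 0 := ne_of_gt (lt_max_of_lt_left ha0)
      field_simp
      ring
    rw [setIntegral_congr_fun measurableSet_Icc (fun x _ => heq x),
      integral_add (hg2_int.const_mul _) (integrable_const 1), integral_const_mul,
      setIntegral_const, smul_eq_mul, mul_one]
    rfl
  -- Fubini identity
  have hfub : (∫ y in a..Real.pi, specG μ y / y ^ 3)
      = ∫ x in Icc 0 Real.pi, (1/(2*(max a x)^2) - 1/(2*Real.pi^2)) ∂μ :=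
    fubini_id μ a ha0 hapi
  have hGa : specG μ a = (μ (Icc 0 a)).toReal := rfl
  have hGpi : specG μ Real.pi = (μ (Icc 0 Real.pi)).toReal := rfl
  rw [hGpi, hGa, hfub]
  calc varV μ n ≤ ∫ x in Icc 0 Real.pi, f x ∂μ := hmono
    _ = Real.pi^2 * (∫ x in Icc 0 Real.pi, (1/(2*(max a x)^2) - 1/(2*Real.pi^2)) ∂μ)
        + (μ (Icc 0 Real.pi)).toReal + Real.pi^2*(n:ℝ)^2/4 * (μ (Icc 0 a)).toReal := by
      rw [hsplit, hind, hg1g2]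
    _ = (μ (Icc 0 Real.pi)).toReal + Real.pi ^ 2 / 4 * (n:ℝ)^2 * (μ (Icc 0 a)).toReal
        + Real.pi^2 * (∫ x in Icc 0 Real.pi, (1/(2*(max a x)^2) - 1/(2*Real.pi^2)) ∂μ) := by
      ring
end

section
/- Let γ ∈ (0,2), let L be slowly varying at infinity, and let (n_k)_{k≥0} be a nondecreasing sequence of positive integers with n_k → ∞ and sup_k n_{k+1}/n_k < ∞. If there exists C > 0 such that V(n_k) ≤ C·n_k^γ·L(n_k) for all k, then there exist C' > 0 and x₀ > 0 such that G(x) ≤ C'·x^{2−γ}·L(1/x) for all x ∈ (0, x₀]. -/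
open MeasureTheory Filter Set Topology

lemma abs_sin_nat_mul_le (n : ℕ) (θ : ℝ) : |Real.sin (n * θ)| ≤ n * |Real.sin θ| := by
  induction n with
  | zero => simp
  | succ k ih =>
    have : ((k:ℝ)+1) * θ = k * θ + θ := by ring
    push_cast
    rw [this, Real.sin_add]
    calc |Real.sin (k*θ) * Real.cos θ + Real.cos (k*θ) * Real.sin θ|
        ≤ |Real.sin (k*θ) * Real.cos θ| + |Real.cos (k*θ) * Real.sin θ| := abs_add_le _ _
      _ ≤ |Real.sin (k*θ)| * 1 + 1 * |Real.sin θ| := by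
          rw [abs_mul, abs_mul]
          gcongr <;> exact Real.abs_cos_le_one _
      _ ≤ k * |Real.sin θ| + 1 * |Real.sin θ| := by
          rw [mul_one]; gcongr
      _ = ((k:ℝ)+1) * |Real.sin θ| := by ring

lemma fejer_nonneg (n : ℕ) (y : ℝ) : 0 ≤ fejerKernel n y := by
  unfold fejerKernel; split <;> positivity

lemma fejer_le_s5 (n : ℕ) (y : ℝ) : fejerKernel n y ≤ (n:ℝ)^2 := by
  unfold fejerKernel; split
  · exact le_refl _
  · have h := abs_sin_nat_mul_le n (y/2)
    have h2 : Real.sin (n * y / 2) ^ 2 ≤ (n:ℝ)^2 * Real.sin (y/2)^2 := by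
      have he : (n:ℝ) * y / 2 = n * (y/2) := by ring
      rw [he]
      calc Real.sin (n * (y/2)) ^ 2 = |Real.sin (n * (y/2))|^2 := (sq_abs _).symm
        _ ≤ ((n:ℝ) * |Real.sin (y/2)|)^2 := by
            apply pow_le_pow_left₀ (abs_nonneg _) h
        _ = (n:ℝ)^2 * Real.sin (y/2)^2 := by rw [mul_pow, sq_abs]
    rcases eq_or_ne (Real.sin (y/2)) 0 with hs | hs
    · simp [hs]
    · rw [div_le_iff₀ (by positivity)]
      linarith [h2]

lemma fejer_meas (n : ℕ) : Measurable (fejerKernel n) := by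
  unfold fejerKernel
  apply Measurable.ite
  · exact measurableSet_eq
  · exact measurable_const
  · apply Measurable.div
    · exact ((Real.measurable_sin.comp ((measurable_id.const_mul _).div_const 2)).pow_const 2)
    · exact ((Real.measurable_sin.comp (measurable_id.div_const 2)).pow_const 2)

lemma fejer_lower (n : ℕ) (hn : 1 ≤ n) (y : ℝ) (hy : y ∈ Icc 0 (1/(n:ℝ))) :
    (n:ℝ)^2/2 ≤ fejerKernel n y := by
  have hn1 : (1:ℝ) ≤ n := by exact_mod_cast hn
  obtain ⟨hy0, hy1⟩ := hy
  rcases eq_or_lt_of_le hy0 with h0 | h0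
  · simp [fejerKernel, ← h0]
  · have hy0' : y ≠ 0 := ne_of_gt h0
    unfold fejerKernel
    rw [if_neg hy0']
    have hyn : (n:ℝ) * y ≤ 1 := by
      rw [le_div_iff₀ (by positivity : (0:ℝ) < (n:ℝ))] at hy1
      linarith
    have hφpos : 0 < (n:ℝ) * y / 2 := by positivity
    have hφ1 : (n:ℝ) * y / 2 ≤ 1 := by linarith
    have hsinφ : (15/16) * ((n:ℝ)*y/2) ≤ Real.sin ((n:ℝ)*y/2) := by
      have := Real.sin_gt_sub_cube hφpos
      nlinarith [sq_nonneg ((n:ℝ)*y/2), hφpos]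
    have hsinθ : Real.sin (y/2) ≤ y/2 := Real.sin_le (by linarith)
    have hθpos : 0 < y/2 := by linarith
    have hsinθpos : 0 < Real.sin (y/2) := by
      apply Real.sin_pos_of_pos_of_lt_pi hθpos
      have : y ≤ 1 := le_trans hy1 (by rw [div_le_one (by linarith)]; exact hn1)
      nlinarith [Real.pi_gt_three]
    rw [le_div_iff₀ (by positivity)]
    have h1 : Real.sin (y/2)^2 ≤ (y/2)^2 := pow_le_pow_left₀ hsinθpos.le hsinθ 2
    have h2 : ((15/16) * ((n:ℝ)*y/2))^2 ≤ Real.sin ((n:ℝ)*y/2)^2 :=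
      pow_le_pow_left₀ (by positivity) hsinφ 2
    nlinarith [sq_nonneg ((n:ℝ)*y), sq_nonneg ((n:ℝ))]

lemma fejer_integrable (μ : Measure ℝ) [IsFiniteMeasure μ] (n : ℕ) (s : Set ℝ) :
    IntegrableOn (fejerKernel n) s μ := by
  refine ⟨((fejer_meas n).aestronglyMeasurable), ?_⟩
  apply HasFiniteIntegral.of_bounded (C := (n:ℝ)^2)
  filter_upwards with y
  rw [Real.norm_eq_abs, abs_of_nonneg (fejer_nonneg n y)]
  exact fejer_le_s5 n y

lemma cheby (μ : Measure ℝ) [IsFiniteMeasure μ] (n : ℕ) (hn : 1 ≤ n) (x : ℝ)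
    (hx : 0 < x) (hxn : x ≤ 1/(n:ℝ)) :
    (n:ℝ)^2/2 * specG μ x ≤ varV μ n := by
  have hn1 : (1:ℝ) ≤ (n:ℝ) := by exact_mod_cast hn
  have hsub : Icc (0:ℝ) x ⊆ Icc 0 (1/(n:ℝ)) := Icc_subset_Icc le_rfl hxn
  have hsub2 : Icc (0:ℝ) x ⊆ Icc 0 Real.pi := by
    apply Icc_subset_Icc le_rfl
    calc x ≤ 1/(n:ℝ) := hxn
      _ ≤ 1 := by rw [div_le_one (by linarith)]; exact hn1
      _ ≤ Real.pi := by linarith [Real.pi_gt_three]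
  have h1 : ∫ y in Icc (0:ℝ) x, ((n:ℝ)^2/2) ∂μ ≤ ∫ y in Icc (0:ℝ) x, fejerKernel n y ∂μ := by
    apply setIntegral_mono_on (integrableOn_const (measure_lt_top _ _).ne)
      (fejer_integrable μ n _) measurableSet_Icc
    intro y hy
    exact fejer_lower n hn y (hsub hy)
  have h2 : ∫ y in Icc (0:ℝ) x, fejerKernel n y ∂μ ≤ ∫ y in Icc 0 Real.pi, fejerKernel n y ∂μ := by
    apply setIntegral_mono_set (fejer_integrable μ n _)
    · filter_upwards with y using fejer_nonneg n y
    · exact HasSubset.Subset.eventuallyLE hsub2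
  have h3 : ∫ y in Icc (0:ℝ) x, ((n:ℝ)^2/2) ∂μ = (μ (Icc 0 x)).toReal * ((n:ℝ)^2/2) := by
    rw [setIntegral_const, smul_eq_mul]; rfl
  rw [varV, specG]
  calc (n:ℝ)^2/2 * (μ (Icc 0 x)).toReal = (μ (Icc 0 x)).toReal * ((n:ℝ)^2/2) := by ring
    _ ≤ _ := by rw [← h3]; exact le_trans h1 h2


lemma uct (L : ℝ → ℝ) (hLmeas : Measurable L) (hLpos : ∀ x > (0:ℝ), 0 < L x)
    (hL : SlowlyVarying L) (κ : ℝ) (hκ : 2 ≤ κ) :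
    ∃ T ≥ (1:ℝ), ∀ t ≥ T, ∀ c, 1 ≤ c → c ≤ κ → L t ≤ Real.exp 2 * L (c * t) := by
  set h : ℝ → ℝ := fun u => Real.log (L (Real.exp u)) with hh
  have hmeas : Measurable h := Real.measurable_log.comp (hLmeas.comp Real.measurable_exp)
  have step1 : ∀ s : ℝ, Tendsto (fun u => h (u + s) - h u) atTop (𝓝 0) := by
    intro s
    have hq : Tendsto (fun u => L (Real.exp s * Real.exp u) / L (Real.exp u)) atTop (𝓝 1) :=
      (hL (Real.exp s) (Real.exp_pos s)).comp Real.tendsto_exp_atTop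
    have hlog : Tendsto (fun u => Real.log (L (Real.exp s * Real.exp u) / L (Real.exp u)))
        atTop (𝓝 0) := by
      have := (Real.continuousAt_log one_ne_zero).tendsto.comp hq
      simpa [Function.comp_def] using this
    apply hlog.congr
    intro u
    have h1 : (0:ℝ) < L (Real.exp s * Real.exp u) := hLpos _ (by positivity)
    have h2 : (0:ℝ) < L (Real.exp u) := hLpos _ (Real.exp_pos u)
    rw [Real.log_div h1.ne' h2.ne']
    simp only [hh]
    rw [Real.exp_add, mul_comm (Real.exp u)]
  set S := Real.log κ with hSdef
  have hS : 0 < S := Real.log_pos (by linarith)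
  set bad : ℝ → Set ℝ := fun u => {s | 1 ≤ |h (u + s) - h u|} with hbaddef
  have hdiffmeas : ∀ u : ℝ, Measurable (fun s => |h (u + s) - h u|) := fun u =>
    ((hmeas.comp (measurable_id.const_add u)).sub measurable_const).abs
  have hbadmeas : ∀ u, MeasurableSet (bad u) := fun u =>
    measurableSet_le measurable_const (hdiffmeas u)
  set m : ℝ → ℝ := fun u => ∫ s in Icc (0:ℝ) (2*S), (bad u).indicator (fun _ => (1:ℝ)) s with hmdef
  have hIccfin : volume (Icc (0:ℝ) (2*S)) < ⊤ := by
    rw [Real.volume_Icc]; exact ENNReal.ofReal_lt_top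
  have hm0 : Tendsto m atTop (𝓝 0) := by
    have := tendsto_integral_filter_of_dominated_convergence
      (μ := volume.restrict (Icc (0:ℝ) (2*S))) (l := (atTop : Filter ℝ))
      (F := fun u s => (bad u).indicator (fun _ => (1:ℝ)) s) (f := fun _ => (0:ℝ))
      (bound := fun _ => (1:ℝ))
      (by filter_upwards with u
          exact ((measurable_const.indicator (hbadmeas u)).aestronglyMeasurable))
      (by filter_upwards with u
          filter_upwards with s
          by_cases hs : s ∈ bad u <;> simp [Set.indicator_apply, hs])
      (integrableOn_const hIccfin.ne)
      (by filter_upwards with s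
          have habs : Tendsto (fun u => |h (u + s) - h u|) atTop (𝓝 0) := by
            simpa using (step1 s).abs
          have hev := habs.eventually_lt_const one_pos
          apply Tendsto.congr' _ tendsto_const_nhds
          filter_upwards [hev] with u hu
          simp [Set.indicator_apply, hbaddef, not_le.2 hu])
    simpa using this
  obtain ⟨U, hU⟩ := eventually_atTop.1 (hm0.eventually_lt_const (show (0:ℝ) < S/2 by linarith))
  set Good : ℝ → Set ℝ := fun u => Icc (0:ℝ) (2*S) ∩ {s | |h (u + s) - h u| < 1} with hGooddef
  have hGoodmeas : ∀ u, MeasurableSet (Good u) := fun u =>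
    measurableSet_Icc.inter (measurableSet_lt (hdiffmeas u) measurable_const)
  have hGoodvol : ∀ u, U ≤ u → ENNReal.ofReal (3*S/2) < volume (Good u) := by
    intro u hu
    have hmu : m u = (volume (Icc (0:ℝ) (2*S) ∩ bad u)).toReal := by
      rw [hmdef]
      simp only
      rw [setIntegral_indicator (hbadmeas u), setIntegral_const, smul_eq_mul, mul_one]; rfl
    have hfin : volume (Icc (0:ℝ) (2*S) ∩ bad u) ≠ ⊤ :=
      ((lt_of_le_of_lt (measure_mono inter_subset_left) hIccfin)).ne
    have hvB : volume (Icc (0:ℝ) (2*S) ∩ bad u) < ENNReal.ofReal (S/2) := by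
      rw [← ENNReal.ofReal_toReal hfin, ← hmu]
      exact (ENNReal.ofReal_lt_ofReal_iff (by linarith)).2 (hU u hu)
    have hcover : Icc (0:ℝ) (2*S) ⊆ Good u ∪ (Icc (0:ℝ) (2*S) ∩ bad u) := by
      intro s hs
      by_cases hb : 1 ≤ |h (u + s) - h u|
      · exact Or.inr ⟨hs, hb⟩
      · exact Or.inl ⟨hs, not_le.1 hb⟩
    have hvol2S : ENNReal.ofReal (2*S) ≤ volume (Good u) + volume (Icc (0:ℝ) (2*S) ∩ bad u) := by
      calc ENNReal.ofReal (2*S) = volume (Icc (0:ℝ) (2*S)) := by rw [Real.volume_Icc, sub_zero]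
        _ ≤ volume (Good u ∪ (Icc (0:ℝ) (2*S) ∩ bad u)) := measure_mono hcover
        _ ≤ _ := measure_union_le _ _
    by_contra hcon
    push_neg at hcon
    have hne : volume (Good u) ≠ ⊤ := ne_top_of_le_ne_top ENNReal.ofReal_ne_top hcon
    have := ENNReal.add_lt_add_of_le_of_lt hne hcon hvB
    rw [← ENNReal.ofReal_add (by linarith) (by linarith)] at this
    have h32 : 3*S/2 + S/2 = 2*S := by ring
    rw [h32] at this
    exact absurd (lt_of_le_of_lt hvol2S this) (lt_irrefl _)
  have key : ∀ u, U ≤ u → ∀ s, s ∈ Icc (0:ℝ) S → |h (u + s) - h u| ≤ 2 := by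
    intro u hu s hs
    obtain ⟨hs0, hsS⟩ := hs
    set B : Set ℝ := (fun v => v - s) ⁻¹' Good (u + s) with hBdef
    have hBmeas : MeasurableSet B := (measurable_id.sub_const s) (hGoodmeas (u+s))
    have hvolB : volume B = volume (Good (u + s)) := by
      rw [hBdef]
      have : (fun v => v - s) = (fun v => v + (-s)) := by funext v; ring
      rw [this]
      exact measure_preimage_add_right volume (-s) _
    have hsubA : Good u ⊆ Icc (0:ℝ) (3*S) := fun v hv =>
      Icc_subset_Icc le_rfl (by linarith) hv.1
    have hsubB : B ⊆ Icc (0:ℝ) (3*S) := by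
      intro v hv
      have h1 : 0 ≤ v - s := hv.1.1
      have h2 : v - s ≤ 2*S := hv.1.2
      constructor <;> linarith
    have hnon : (Good u ∩ B).Nonempty := by
      by_contra hemp
      rw [not_nonempty_iff_eq_empty] at hemp
      have heq := measure_union_add_inter (μ := volume) (Good u) hBmeas
      rw [hemp, measure_empty, add_zero] at heq
      have hlt : ENNReal.ofReal (3*S) < volume (Good u) + volume B := by
        have hvB2 : ENNReal.ofReal (3*S/2) < volume B := by
          rw [hvolB]; exact hGoodvol (u+s) (by linarith)
        have := ENNReal.add_lt_add (hGoodvol u hu) hvB2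
        rw [← ENNReal.ofReal_add (by linarith) (by linarith)] at this
        have h33 : 3*S/2 + 3*S/2 = 3*S := by ring
        rwa [h33] at this
      rw [← heq] at hlt
      have hle : volume (Good u ∪ B) ≤ ENNReal.ofReal (3*S) := by
        calc volume (Good u ∪ B) ≤ volume (Icc (0:ℝ) (3*S)) :=
              measure_mono (union_subset hsubA hsubB)
          _ = ENNReal.ofReal (3*S) := by rw [Real.volume_Icc, sub_zero]
      exact absurd (lt_of_le_of_lt hle hlt) (lt_irrefl _)
    obtain ⟨v, hvA, hvB⟩ := hnon
    have h1 : |h (u + v) - h u| < 1 := hvA.2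
    have h2 : |h (u + v) - h (u + s)| < 1 := by
      have h2' : |h (u + s + (v - s)) - h (u + s)| < 1 := hvB.2
      have he : u + s + (v - s) = u + v := by ring
      rwa [he] at h2'
    calc |h (u + s) - h u| = |(h (u + v) - h u) - (h (u + v) - h (u + s))| := by ring_nf
      _ ≤ |h (u + v) - h u| + |h (u + v) - h (u + s)| := abs_sub _ _
      _ ≤ 2 := by linarith
  refine ⟨max 1 (Real.exp U), le_max_left _ _, ?_⟩
  intro t ht c hc1 hcκ
  have ht0 : (0:ℝ) < t := lt_of_lt_of_le one_pos (le_trans (le_max_left _ _) ht)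
  have hc0 : (0:ℝ) < c := lt_of_lt_of_le one_pos hc1
  have hu : U ≤ Real.log t := (Real.le_log_iff_exp_le ht0).2 (le_trans (le_max_right _ _) ht)
  have hs0 : 0 ≤ Real.log c := Real.log_nonneg hc1
  have hsS : Real.log c ≤ S := Real.log_le_log hc0 hcκ
  have hk := key _ hu _ ⟨hs0, hsS⟩
  have e1 : Real.exp (Real.log t + Real.log c) = c * t := by
    rw [Real.exp_add, Real.exp_log ht0, Real.exp_log hc0]; ring
  have e2 : Real.exp (Real.log t) = t := Real.exp_log ht0
  simp only [hh] at hk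
  rw [e1, e2] at hk
  have hLt : 0 < L t := hLpos t ht0
  have hLct : 0 < L (c*t) := hLpos _ (by positivity)
  have hkey2 : Real.log (L t) ≤ 2 + Real.log (L (c*t)) := by
    have := abs_le.1 hk
    linarith [this.1]
  calc L t = Real.exp (Real.log (L t)) := (Real.exp_log hLt).symm
    _ ≤ Real.exp (2 + Real.log (L (c*t))) := Real.exp_le_exp.2 hkey2
    _ = Real.exp 2 * L (c*t) := by rw [Real.exp_add, Real.exp_log hLct]


/-- If `V(n_k) ≤ C n_k^γ L(n_k)` along a nondecreasing integer sequence `n_k → ∞`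
with bounded ratios `n_{k+1}/n_k`, then `G(x) ≤ C' x^{2-γ} L(1/x)` near `0`. -/
theorem spectral_upper_of_variance_upper_subseq (μ : Measure ℝ) [IsFiniteMeasure μ]
    (hsupp : μ (Icc 0 Real.pi)ᶜ = 0)
    (γ : ℝ) (hγ : γ ∈ Ioo (0 : ℝ) 2)
    (L : ℝ → ℝ) (hLmeas : Measurable L) (hLpos : ∀ x > (0 : ℝ), 0 < L x)
    (hL : SlowlyVarying L)
    (n : ℕ → ℕ) (hpos : ∀ k, 0 < n k) (hmono : Monotone n)
    (htop : Tendsto n atTop atTop)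
    (hratio : ∃ κ : ℝ, ∀ k, (n (k + 1) : ℝ) ≤ κ * (n k : ℝ))
    (hV : ∃ C > (0 : ℝ), ∀ k, varV μ (n k) ≤ C * (n k : ℝ) ^ γ * L (n k)) :
    ∃ C' > (0 : ℝ), ∃ x₀ > (0 : ℝ), ∀ x : ℝ, 0 < x → x ≤ x₀ →
      specG μ x ≤ C' * x ^ (2 - γ) * L (1 / x) := by
  classical
  obtain ⟨C, hC, hVle⟩ := hV
  obtain ⟨κ, hκ⟩ := hratio
  obtain ⟨hγ0, hγ2⟩ := hγ
  set κ' := max κ 2 with hκ'def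
  have hκ'2 : (2:ℝ) ≤ κ' := le_max_right _ _
  have hκ'0 : (0:ℝ) < κ' := by linarith
  have hκ' : ∀ k, (n (k+1) : ℝ) ≤ κ' * n k := fun k =>
    le_trans (hκ k) (mul_le_mul_of_nonneg_right (le_max_left _ _) (Nat.cast_nonneg _))
  obtain ⟨T, hT1, hT⟩ := uct L hLmeas hLpos hL κ' hκ'2
  have hT0 : (0:ℝ) < T := by linarith
  have hn00 : (0:ℝ) < n 0 := by exact_mod_cast hpos 0
  set x₀ : ℝ := min (1/(n 0 : ℝ)) (1/(κ' * T)) with hx₀def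
  have hx₀pos : 0 < x₀ := lt_min (by positivity) (by positivity)
  refine ⟨2 * C * Real.exp 2 * κ' ^ (2 - γ), by positivity, x₀, hx₀pos, ?_⟩
  intro x hx hxx₀
  have hcast : Tendsto (fun k => (n k : ℝ)) atTop atTop :=
    tendsto_natCast_atTop_atTop.comp htop
  have hex : ∃ k, (1:ℝ)/x < n k := (hcast.eventually_gt_atTop (1/x)).exists
  set K := Nat.find hex with hKdef
  have hKspec : (1:ℝ)/x < n K := Nat.find_spec hex
  have hxn0 : x ≤ 1/(n 0 : ℝ) := le_trans hxx₀ (min_le_left _ _)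
  have hn0x : (n 0 : ℝ) ≤ 1/x := by
    rw [le_div_iff₀ hx]
    have := (le_div_iff₀ hn00).1 hxn0
    linarith [this]
  have hKpos : 0 < K := by
    rcases Nat.eq_zero_or_pos K with h0 | h
    · exfalso; rw [h0] at hKspec; linarith
    · exact h
  set k := K - 1 with hkdef
  have hk1 : k + 1 = K := Nat.succ_pred_eq_of_pos hKpos
  have hnk_le : (n k : ℝ) ≤ 1/x := by
    have := Nat.find_min hex (show k < K from Nat.pred_lt hKpos.ne')
    exact not_lt.1 this
  have hnk1_gt : (1:ℝ)/x < n (k+1) := by rw [hk1]; exact hKspec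
  set a : ℝ := (n k : ℝ) with hadef
  have ha1 : (1:ℝ) ≤ a := by rw [hadef]; exact_mod_cast hpos k
  have ha0 : (0:ℝ) < a := by linarith
  have hax : (1:ℝ)/x < κ' * a := lt_of_lt_of_le hnk1_gt (hκ' k)
  have haxx : 1 < κ' * a * x := by
    have := (div_lt_iff₀ hx).1 hax
    linarith
  have hxT : x * (κ' * T) ≤ 1 := (le_div_iff₀ (by positivity)).1 (le_trans hxx₀ (min_le_right _ _))
  have hnkT : T ≤ a := by nlinarith [mul_pos hκ'0 hx, haxx, hxT]
  have hxa1 : x * a ≤ 1 := by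
    have := (le_div_iff₀ hx).1 hnk_le
    linarith
  set c : ℝ := 1/(x*a) with hcdef
  have hc1 : (1:ℝ) ≤ c := by
    rw [hcdef, le_div_iff₀ (by positivity)]
    linarith
  have hcκ' : c ≤ κ' := by
    rw [hcdef, div_le_iff₀ (by positivity)]
    linarith [haxx]
  have hca : c * a = 1/x := by
    rw [hcdef]; field_simp
  have f3 : L a ≤ Real.exp 2 * L (1/x) := by
    have := hT a hnkT c hc1 hcκ'
    rwa [hca] at this
  -- Chebyshev
  have hxa : x ≤ 1/a := by
    rw [le_div_iff₀ ha0]; linarith [hxa1]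
  have hcheb := cheby μ (n k) (hpos k) x hx hxa
  have hvv := hVle k
  have h2pos : (0:ℝ) < a ^ 2 := by positivity
  have hsplit : a ^ (γ - 2) = a ^ γ / a ^ 2 := by
    rw [Real.rpow_sub ha0]
    congr 1
    rw [show ((2:ℝ)) = ((2:ℕ):ℝ) by norm_num, Real.rpow_natCast]
  have hstep1 : specG μ x ≤ 2 * C * a ^ (γ - 2) * L a := by
    have hdiv : specG μ x ≤ (2 * (C * a ^ γ * L a)) / a ^ 2 := by
      rw [le_div_iff₀ h2pos]
      have : a ^ 2 / 2 * specG μ x ≤ C * a ^ γ * L a := le_trans hcheb hvv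
      linarith
    calc specG μ x ≤ (2 * (C * a ^ γ * L a)) / a ^ 2 := hdiv
      _ = 2 * C * (a ^ γ / a ^ 2) * L a := by ring
      _ = 2 * C * a ^ (γ - 2) * L a := by rw [hsplit]
  have hlow : 1/(κ'*x) ≤ a := by
    rw [div_le_iff₀ (by positivity)]
    linarith [haxx]
  have f2 : a ^ (γ - 2) ≤ κ' ^ (2-γ) * x ^ (2-γ) := by
    have h1 : a ^ (γ-2) ≤ (1/(κ'*x)) ^ (γ-2) :=
      Real.rpow_le_rpow_of_nonpos (by positivity) hlow (by linarith)
    have hb : (0:ℝ) < κ'*x := by positivity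
    have h2 : (1/(κ'*x)) ^ (γ-2) = (κ'*x) ^ (2-γ) := by
      rw [one_div, Real.inv_rpow hb.le, ← Real.rpow_neg hb.le]
      congr 1; ring
    have h3 : (κ'*x) ^ (2-γ) = κ' ^ (2-γ) * x ^ (2-γ) := Real.mul_rpow hκ'0.le hx.le
    rw [h2, h3] at h1
    exact h1
  have hLa : 0 < L a := hLpos a ha0
  have hL1x : 0 < L (1/x) := hLpos _ (by positivity)
  calc specG μ x ≤ 2 * C * a ^ (γ-2) * L a := hstep1
    _ ≤ (2 * C * (κ' ^ (2-γ) * x ^ (2-γ))) * (Real.exp 2 * L (1/x)) := by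
        apply mul_le_mul _ f3 hLa.le (by positivity)
        gcongr
    _ = (2 * C * Real.exp 2 * κ' ^ (2 - γ)) * x ^ (2-γ) * L (1/x) := by ring
end

section
/- Let μ be the measure on [0,π] with density y ↦ 2y with respect to Lebesgue measure, so that G(x) = x² for x ∈ [0,π]. Then V(n) = 4·ln(n) + O(1); that is, there exists a constant C such that |V(n) − 4·ln(n)| ≤ C for all integers n ≥ 1. In particular, sup_n V(n) = ∞ while G(x)/x^{2} is bounded. -/
open MeasureTheory Filter Set Topology

open Real intervalIntegral
open scoped ENNReal NNReal

section Aux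

lemma varV_eq_aux (μ : Measure ℝ)
    (hμ : μ = (volume.restrict (Icc 0 Real.pi)).withDensity
      (fun y => ENNReal.ofReal (2 * y))) (n : ℕ) :
    varV μ n = ∫ y in Ioc 0 Real.pi,
      Real.sin (n * y / 2) ^ 2 / Real.sin (y / 2) ^ 2 * (2 * y) := by
  rw [varV, hμ, MeasureTheory.restrict_withDensity measurableSet_Icc,
    Measure.restrict_restrict measurableSet_Icc, Set.inter_self]
  rw [show (fun y : ℝ => ENNReal.ofReal (2 * y)) = (fun y : ℝ => ((2 * y).toNNReal : ℝ≥0∞))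
      from rfl]
  rw [integral_withDensity_eq_integral_smul (by fun_prop) _]
  rw [integral_Icc_eq_integral_Ioc]
  apply setIntegral_congr_fun measurableSet_Ioc
  intro y hy
  have hy0 : y ≠ 0 := ne_of_gt hy.1
  simp only [NNReal.smul_def, Real.coe_toNNReal _ (by linarith [hy.1] : (0:ℝ) ≤ 2*y),
    fejerKernel, if_neg hy0]
  rw [smul_eq_mul]; ring

lemma sin_half_bounds_aux {y : ℝ} (h0 : 0 < y) (hπ : y ≤ π) :
    y / π ≤ Real.sin (y / 2) ∧ Real.sin (y / 2) ≤ y / 2 ∧ 0 < Real.sin (y / 2) := by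
  have hpi := Real.pi_pos
  have h1 : 2 / π * (y / 2) ≤ Real.sin (y / 2) :=
    Real.mul_le_sin (by linarith) (by linarith)
  have h2 : Real.sin (y / 2) ≤ y / 2 := Real.sin_le (by linarith)
  have h3 : 0 < Real.sin (y / 2) := Real.sin_pos_of_pos_of_lt_pi (by linarith) (by linarith)
  refine ⟨?_, h2, h3⟩
  calc y / π = 2 / π * (y / 2) := by ring
  _ ≤ _ := h1

lemma f_bounds_aux {y : ℝ} (h0 : 0 < y) (hπ : y ≤ π) :
    0 ≤ 2 * y / Real.sin (y / 2) ^ 2 - 8 / y ∧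
      2 * y / Real.sin (y / 2) ^ 2 - 8 / y ≤ 2 * π ^ 2 := by
  obtain ⟨hge, hle, hs⟩ := sin_half_bounds_aux h0 hπ
  have hpi := Real.pi_pos
  set s := Real.sin (y / 2) with hsdef
  have hs2 : (0:ℝ) < s ^ 2 := by positivity
  constructor
  · rw [sub_nonneg, div_le_div_iff₀ h0 hs2]
    nlinarith
  · rw [div_sub_div _ _ (ne_of_gt hs2) (ne_of_gt h0), div_le_iff₀ (by positivity)]
    have hsπ : y^2 / π^2 ≤ s^2 := by
      have := mul_self_le_mul_self (by positivity : (0:ℝ) ≤ y / π) hge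
      calc y^2/π^2 = (y/π)*(y/π) := by ring
      _ ≤ s * s := this
      _ = s^2 := by ring
    have key : 2*y*y - s^2*8 ≤ 2*y^3 := by
      rcases le_or_gt y 1 with hy1 | hy1
      · have hcube : y/2 - (y/2)^3/4 < s := by
          have h6 := Real.sin_gt_sub_cube (x := y/2) (by linarith)
          have h7 : (0:ℝ) < (y/2)^3 := by positivity
          rw [← hsdef] at h6; linarith
        nlinarith
      · nlinarith
    have hy2 : y^2 ≤ s^2 * π^2 := by
      rw [div_le_iff₀ (by positivity)] at hsπ; linarith
    have : 2*y^3 ≤ 2*π^2 * (s^2 * y) := by nlinarith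
    linarith

lemma integrableOn_Ioc_of_bound_aux {g : ℝ → ℝ} {a b C : ℝ} (hg : Measurable g)
    (hC : ∀ y ∈ Set.Ioc a b, |g y| ≤ C) : MeasureTheory.IntegrableOn g (Set.Ioc a b) := by
  haveI : IsFiniteMeasure (volume.restrict (Set.Ioc a b)) :=
    ⟨by rw [Measure.restrict_apply_univ, Real.volume_Ioc]; exact ENNReal.ofReal_lt_top⟩
  apply Integrable.mono' (integrable_const C) hg.aestronglyMeasurable
  rw [ae_restrict_iff' measurableSet_Ioc]
  exact ae_of_all _ fun y hy => by rw [Real.norm_eq_abs]; exact hC y hy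

lemma E_bound_aux (n : ℕ) (hn : 1 ≤ n) :
    |∫ y in (1/(n:ℝ))..π, y⁻¹ * Real.cos (n * y)| ≤ 3 := by
  have hpi := Real.pi_pos
  have hpi1 := Real.pi_gt_three
  have hn0 : (0:ℝ) < n := by exact_mod_cast hn
  set a : ℝ := 1 / n with ha_def
  have ha : 0 < a := by positivity
  have ha1 : a ≤ 1 := by rw [ha_def, div_le_one hn0]; exact_mod_cast hn
  have haπ : a ≤ π := by linarith
  have huIcc : uIcc a π = Icc a π := uIcc_of_le haπ
  have hne : ∀ y ∈ Icc a π, y ≠ 0 := fun y hy => by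
    have := hy.1; intro h; rw [h] at this; linarith
  have hu : ∀ y ∈ uIcc a π, HasDerivAt (fun x : ℝ => x⁻¹) (-(y^2)⁻¹) y := by
    intro y hy; exact hasDerivAt_inv (hne y (huIcc ▸ hy))
  have hv : ∀ y ∈ uIcc a π, HasDerivAt (fun x : ℝ => Real.sin (n*x) / n) (Real.cos (n*y)) y := by
    intro y _
    have h1 : HasDerivAt (fun x : ℝ => (n:ℝ) * x) n y := by
      simpa using (hasDerivAt_id y).const_mul (n:ℝ)
    have h2 := ((Real.hasDerivAt_sin ((n:ℝ)*y)).comp y h1).div_const (n:ℝ)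
    simpa [mul_div_assoc, div_self (ne_of_gt hn0)] using h2
  have hcont_u' : ContinuousOn (fun y : ℝ => -(y^2)⁻¹) (Icc a π) := by
    apply ContinuousOn.neg
    apply ContinuousOn.inv₀ (by fun_prop)
    intro y hy; exact pow_ne_zero _ (hne y hy)
  have hu'int : IntervalIntegrable (fun y : ℝ => -(y^2)⁻¹) volume a π :=
    (huIcc ▸ hcont_u' : ContinuousOn _ (uIcc a π)).intervalIntegrable
  have hv'int : IntervalIntegrable (fun y : ℝ => Real.cos (n*y)) volume a π :=
    (Continuous.intervalIntegrable (by fun_prop) _ _)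
  have ibp := integral_mul_deriv_eq_deriv_mul hu hv hu'int hv'int
  rw [ibp]
  have habs : ∀ t : ℝ, |Real.sin t| ≤ 1 := fun t =>
    abs_le.mpr ⟨Real.neg_one_le_sin t, Real.sin_le_one t⟩
  have hb1 : |π⁻¹ * (Real.sin (n*π) / n)| ≤ 1 := by
    rw [abs_mul, abs_div, abs_of_pos (inv_pos.2 hpi), abs_of_pos hn0]
    have : π⁻¹ * (|Real.sin (n*π)| / n) ≤ 1 * (1 / 1) := by
      gcongr
      · rw [inv_le_one_iff₀]; right; linarith
      · exact habs _
      · exact_mod_cast hn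
    linarith
  have hb2 : |a⁻¹ * (Real.sin (n*a) / n)| ≤ 1 := by
    rw [abs_mul, abs_div, abs_of_pos (inv_pos.2 ha), abs_of_pos hn0]
    have hsa : |Real.sin (n*a)| ≤ n * a := by
      have := Real.abs_sin_le_abs (x := n*a)
      rwa [abs_of_nonneg (by positivity : (0:ℝ) ≤ (n:ℝ)*a)] at this
    have : a⁻¹ * (|Real.sin (n*a)| / n) ≤ a⁻¹ * ((n * a) / n) := by gcongr
    have heq : a⁻¹ * ((n:ℝ) * a / n) = 1 := by field_simp
    linarith
  have hvcont : ContinuousOn (fun y : ℝ => -(y^2)⁻¹ * (Real.sin (n*y) / n)) (Icc a π) :=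
    hcont_u'.mul (by fun_prop)
  have hb3 : |∫ y in a..π, -(y^2)⁻¹ * (Real.sin (n*y) / n)| ≤ 1 := by
    have hint : IntervalIntegrable (fun y : ℝ => -(y^2)⁻¹ * (Real.sin (n*y) / n)) volume a π :=
      (huIcc ▸ hvcont : ContinuousOn _ (uIcc a π)).intervalIntegrable
    have hsqcont : ContinuousOn (fun x : ℝ => (x^2)⁻¹) (Icc a π) := by
      apply ContinuousOn.inv₀ (by fun_prop)
      intro y hy; exact pow_ne_zero _ (hne y hy)
    have hgcont : ContinuousOn (fun y : ℝ => (1/(n:ℝ)) * (y^2)⁻¹) (Icc a π) :=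
      continuousOn_const.mul hsqcont
    have hgint : IntervalIntegrable (fun y : ℝ => (1/(n:ℝ)) * (y^2)⁻¹) volume a π :=
      (huIcc ▸ hgcont : ContinuousOn _ (uIcc a π)).intervalIntegrable
    have h1 : |∫ y in a..π, -(y^2)⁻¹ * (Real.sin (n*y) / n)|
        ≤ ∫ y in a..π, |(fun y : ℝ => -(y^2)⁻¹ * (Real.sin (n*y) / n)) y| :=
      intervalIntegral.abs_integral_le_integral_abs haπ
    have h2 : (∫ y in a..π, |(fun y : ℝ => -(y^2)⁻¹ * (Real.sin (n*y) / n)) y|)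
        ≤ ∫ y in a..π, (1/(n:ℝ)) * (y^2)⁻¹ := by
      apply intervalIntegral.integral_mono_on haπ _ hgint
      · intro y hy
        have hy0 : (0:ℝ) < y := lt_of_lt_of_le ha hy.1
        simp only [abs_mul, abs_neg, abs_inv, abs_div]
        rw [abs_of_pos (by positivity : (0:ℝ) < y^2), abs_of_pos hn0]
        calc (y^2)⁻¹ * (|Real.sin (n*y)| / n) ≤ (y^2)⁻¹ * (1/n) := by gcongr; exact habs _
        _ = 1/n * (y^2)⁻¹ := by ring
      · exact hint.abs
    have h3 : (∫ y in a..π, (1/(n:ℝ)) * (y^2)⁻¹) = (1/(n:ℝ)) * (a⁻¹ - π⁻¹) := by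
      rw [intervalIntegral.integral_const_mul]
      have hftc : ∀ y ∈ uIcc a π, HasDerivAt (fun x : ℝ => -(x⁻¹)) ((y^2)⁻¹) y := by
        intro y hy
        simpa using (hasDerivAt_inv (hne y (huIcc ▸ hy))).fun_neg
      rw [intervalIntegral.integral_eq_sub_of_hasDerivAt hftc
        (huIcc ▸ hsqcont : ContinuousOn _ (uIcc a π)).intervalIntegrable]
      ring
    have h4 : (1/(n:ℝ)) * (a⁻¹ - π⁻¹) ≤ 1 := by
      have : a⁻¹ = n := by rw [ha_def]; field_simp
      rw [this]
      have : (1/(n:ℝ)) * ((n:ℝ) - π⁻¹) ≤ (1/(n:ℝ)) * n := by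
        gcongr
        · linarith [inv_pos.2 hpi]
      have h5 : (1/(n:ℝ)) * (n:ℝ) = 1 := by field_simp
      linarith
    linarith
  calc |π⁻¹ * (Real.sin (n*π) / n) - a⁻¹ * (Real.sin (n*a) / n)
        - ∫ y in a..π, -(y^2)⁻¹ * (Real.sin (n*y) / n)|
      ≤ |π⁻¹ * (Real.sin (n*π) / n) - a⁻¹ * (Real.sin (n*a) / n)|
        + |∫ y in a..π, -(y^2)⁻¹ * (Real.sin (n*y) / n)| := abs_sub _ _
  _ ≤ (|π⁻¹ * (Real.sin (n*π) / n)| + |a⁻¹ * (Real.sin (n*a) / n)|) + 1 := by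
      gcongr; exact abs_sub _ _
  _ ≤ 3 := by linarith

noncomputable def auxH (n : ℕ) (y : ℝ) : ℝ := Real.sin (n*y/2)^2 / y

noncomputable def auxG (n : ℕ) (y : ℝ) : ℝ :=
  Real.sin (n*y/2)^2 * (2*y/Real.sin (y/2)^2 - 8/y)

lemma auxH_meas (n : ℕ) : Measurable (auxH n) := by unfold auxH; fun_prop

lemma auxG_meas (n : ℕ) : Measurable (auxG n) := by unfold auxG; fun_prop

lemma auxH_nonneg (n : ℕ) {y : ℝ} (hy : 0 < y) : 0 ≤ auxH n y := by
  unfold auxH; positivity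

lemma auxH_le (n : ℕ) {y : ℝ} (hy : 0 < y) : auxH n y ≤ (n:ℝ)^2*y/4 := by
  unfold auxH
  have hsq : Real.sin (n*y/2)^2 ≤ ((n:ℝ)*y/2)^2 := Real.sin_sq_le_sq
  have h2 : ((n:ℝ)*y/2)^2 / y = (n:ℝ)^2*y/4 := by field_simp; ring
  calc Real.sin (n*y/2)^2 / y ≤ ((n:ℝ)*y/2)^2 / y := by gcongr
  _ = (n:ℝ)^2*y/4 := h2

lemma auxG_abs_le (n : ℕ) {y : ℝ} (h0 : 0 < y) (hπ : y ≤ π) : |auxG n y| ≤ 2*π^2 := by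
  obtain ⟨hf0, hf1⟩ := f_bounds_aux h0 hπ
  have hs1 : Real.sin (n*y/2)^2 ≤ 1 := Real.sin_sq_le_one _
  unfold auxG
  rw [abs_mul, abs_of_nonneg (sq_nonneg _), abs_of_nonneg hf0]
  nlinarith [sq_nonneg (Real.sin (n*y/2))]

lemma key_aux (n : ℕ) (hn : 1 ≤ n) :
    |(∫ y in Ioc 0 π, Real.sin (n*y/2)^2 / Real.sin (y/2)^2 * (2*y)) - 4*Real.log n|
      ≤ 2*π^3 + 4*Real.log π + 14 := by
  have hpi := Real.pi_pos
  have hpi3 := Real.pi_gt_three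
  have hn0 : (0:ℝ) < n := by exact_mod_cast hn
  have hn1 : (1:ℝ) ≤ n := by exact_mod_cast hn
  set a : ℝ := 1 / n with ha_def
  have ha : 0 < a := by positivity
  have ha1 : a ≤ 1 := by rw [ha_def, div_le_one hn0]; exact hn1
  have haπ : a ≤ π := by linarith
  have hint1 : IntegrableOn (fun y => 8 * auxH n y) (Ioc 0 π) := by
    apply integrableOn_Ioc_of_bound_aux (C := 2*(n:ℝ)^2*π) ((auxH_meas n).const_mul 8)
    intro y hy
    rw [abs_of_nonneg (by linarith [auxH_nonneg n hy.1])]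
    have h1 := auxH_le n hy.1
    nlinarith [hy.2]
  have hint2 : IntegrableOn (auxG n) (Ioc 0 π) := by
    apply integrableOn_Ioc_of_bound_aux (C := 2*π^2) (auxG_meas n)
    intro y hy
    exact auxG_abs_le n hy.1 hy.2
  have hsplit : (∫ y in Ioc 0 π, Real.sin (n*y/2)^2 / Real.sin (y/2)^2 * (2*y))
      = (∫ y in Ioc 0 π, 8 * auxH n y) + ∫ y in Ioc 0 π, auxG n y := by
    rw [← integral_add hint1 hint2]
    apply setIntegral_congr_fun measurableSet_Ioc
    intro y hy
    have hy0 : y ≠ 0 := ne_of_gt hy.1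
    have hs : Real.sin (y/2) ≠ 0 := by
      have := Real.sin_pos_of_pos_of_lt_pi (by linarith [hy.1] : (0:ℝ) < y/2)
        (by linarith [hy.2] : y/2 < π)
      exact ne_of_gt this
    unfold auxH auxG
    field_simp
    ring
  have hB : |∫ y in Ioc 0 π, auxG n y| ≤ 2*π^3 := by
    have hb : ∀ y ∈ Ioc (0:ℝ) π, ‖auxG n y‖ ≤ 2*π^2 := fun y hy => by
      rw [Real.norm_eq_abs]; exact auxG_abs_le n hy.1 hy.2
    have := norm_setIntegral_le_of_norm_le_const (μ := volume) (s := Ioc 0 π)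
      (by rw [Real.volume_Ioc]; exact ENNReal.ofReal_lt_top) hb
    rw [Measure.real, Real.volume_Ioc, ENNReal.toReal_ofReal (by linarith)] at this
    rw [← Real.norm_eq_abs]
    calc ‖∫ y in Ioc 0 π, auxG n y‖ ≤ 2*π^2 * (π - 0) := this
    _ = 2*π^3 := by ring
  have hI1 : IntervalIntegrable (auxH n) volume 0 a := by
    rw [intervalIntegrable_iff_integrableOn_Ioc_of_le ha.le]
    apply integrableOn_Ioc_of_bound_aux (C := (n:ℝ)/4) (auxH_meas n)
    intro y hy
    rw [abs_of_nonneg (auxH_nonneg n hy.1)]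
    have h1 := auxH_le n hy.1
    have h3 : (n:ℝ)^2*y/4 ≤ (n:ℝ)^2*a/4 := by nlinarith [hy.2]
    have h4 : (n:ℝ)^2*a/4 = (n:ℝ)/4 := by rw [ha_def]; field_simp
    linarith
  have hIcc : uIcc a π = Icc a π := uIcc_of_le haπ
  have hne : ∀ y ∈ Icc a π, y ≠ 0 := fun y hy => by
    have := hy.1; intro hc; rw [hc] at this; linarith
  have hI2 : IntervalIntegrable (auxH n) volume a π := by
    apply ContinuousOn.intervalIntegrable
    rw [hIcc]
    unfold auxH
    exact ContinuousOn.div (by fun_prop) continuousOn_id hne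
  have hC : (∫ y in Ioc 0 π, 8 * auxH n y)
      = 8 * ((∫ y in (0:ℝ)..a, auxH n y) + ∫ y in a..π, auxH n y) := by
    rw [← intervalIntegral.integral_of_le hpi.le, intervalIntegral.integral_const_mul,
      intervalIntegral.integral_add_adjacent_intervals hI1 hI2]
  have hD : |∫ y in (0:ℝ)..a, auxH n y| ≤ 1/4 := by
    rw [intervalIntegral.integral_of_le ha.le]
    have hb : ∀ y ∈ Ioc (0:ℝ) a, ‖auxH n y‖ ≤ (n:ℝ)/4 := by
      intro y hy
      rw [Real.norm_eq_abs, abs_of_nonneg (auxH_nonneg n hy.1)]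
      have h1 := auxH_le n hy.1
      have h3 : (n:ℝ)^2*y/4 ≤ (n:ℝ)^2*a/4 := by nlinarith [hy.2]
      have h4 : (n:ℝ)^2*a/4 = (n:ℝ)/4 := by rw [ha_def]; field_simp
      linarith
    have := norm_setIntegral_le_of_norm_le_const (μ := volume) (s := Ioc 0 a)
      (by rw [Real.volume_Ioc]; exact ENNReal.ofReal_lt_top) hb
    rw [Measure.real, Real.volume_Ioc, ENNReal.toReal_ofReal (by linarith)] at this
    rw [← Real.norm_eq_abs]
    calc ‖∫ y in Ioc 0 a, auxH n y‖ ≤ (n:ℝ)/4 * (a - 0) := this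
    _ = 1/4 := by rw [ha_def]; field_simp; ring
  have hE : (∫ y in a..π, auxH n y)
      = (1/2)*(Real.log π + Real.log n) - (1/2)*(∫ y in a..π, y⁻¹ * Real.cos (n*y)) := by
    have hid : ∀ y : ℝ, auxH n y = (1/2)*y⁻¹ - (1/2)*(y⁻¹ * Real.cos (n*y)) := by
      intro y
      have harg : 2*((n:ℝ)*y/2) = (n:ℝ)*y := by ring
      unfold auxH
      rw [Real.sin_sq_eq_half_sub, harg, div_eq_mul_inv]
      ring
    have hc1 : IntervalIntegrable (fun y : ℝ => (1/2)*y⁻¹) volume a π := by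
      apply ContinuousOn.intervalIntegrable
      rw [hIcc]
      exact continuousOn_const.mul (continuousOn_id.inv₀ hne)
    have hc2 : IntervalIntegrable (fun y : ℝ => (1/2)*(y⁻¹ * Real.cos (n*y))) volume a π := by
      apply ContinuousOn.intervalIntegrable
      rw [hIcc]
      exact continuousOn_const.mul ((continuousOn_id.inv₀ hne).mul (by fun_prop))
    rw [intervalIntegral.integral_congr
      (g := fun y => (1/2)*y⁻¹ - (1/2)*(y⁻¹ * Real.cos (n*y))) (fun y _ => hid y)]
    rw [intervalIntegral.integral_sub hc1 hc2, intervalIntegral.integral_const_mul,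
      intervalIntegral.integral_const_mul]
    have hinv : (∫ y in a..π, y⁻¹) = Real.log (π / a) := by
      apply integral_inv
      rw [hIcc]
      intro hc
      exact hne 0 hc rfl
    rw [hinv, ha_def]
    have hdiv : π / (1/(n:ℝ)) = π * n := by field_simp
    rw [hdiv, Real.log_mul (ne_of_gt hpi) (ne_of_gt hn0)]
  have hEb := E_bound_aux n hn
  rw [← ha_def] at hEb
  rw [hsplit, hC, hE]
  have h1 := abs_le.mp hD
  have h2 := abs_le.mp hEb
  have h3 := abs_le.mp hB
  rw [abs_le]
  have hlπ := Real.log_nonneg (by linarith : (1:ℝ) ≤ π)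
  constructor
  · nlinarith [h1.1, h2.2, h3.1]
  · nlinarith [h1.2, h2.1, h3.2]

lemma measure_Icc_calc (μ : Measure ℝ)
    (hμ : μ = (volume.restrict (Icc 0 Real.pi)).withDensity
      (fun y => ENNReal.ofReal (2 * y))) {x : ℝ} (hx : 0 ≤ x) :
    μ (Icc 0 x) = ENNReal.ofReal ((min x π)^2) := by
  have hpi := Real.pi_pos
  have hm0 : 0 ≤ min x π := le_min hx hpi.le
  rw [hμ, withDensity_apply _ measurableSet_Icc, Measure.restrict_restrict measurableSet_Icc,
    Icc_inter_Icc]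
  rw [max_self, show min x π = min x π from rfl]
  have hint : IntegrableOn (fun y : ℝ => 2 * y) (Icc 0 (min x π)) :=
    (continuous_const.mul continuous_id).integrableOn_Icc
  have hnn : 0 ≤ᵐ[volume.restrict (Icc 0 (min x π))] (fun y : ℝ => 2 * y) := by
    rw [EventuallyLE, ae_restrict_iff' measurableSet_Icc]
    exact ae_of_all _ fun y hy => by simp only [Pi.zero_apply]; linarith [hy.1]
  rw [← MeasureTheory.ofReal_integral_eq_lintegral_ofReal hint hnn]
  congr 1
  rw [integral_Icc_eq_integral_Ioc, ← intervalIntegral.integral_of_le hm0,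
    intervalIntegral.integral_const_mul, integral_id]
  ring

end Aux

/-- For the measure with density `2y` on `[0,π]` (so `G(x) = x²`), one has
`V(n) = 4 ln n + O(1)`; in particular `sup_n V(n) = ∞` while `G(x)/x²` is bounded. -/
theorem variance_log_growth_example (μ : Measure ℝ)
    (hμ : μ = (volume.restrict (Icc 0 Real.pi)).withDensity
      (fun y => ENNReal.ofReal (2 * y))) :
    (∀ x ∈ Icc (0 : ℝ) Real.pi, specG μ x = x ^ 2) ∧
    (∃ C : ℝ, ∀ n : ℕ, 1 ≤ n → |varV μ n - 4 * Real.log n| ≤ C) ∧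
    (¬ ∃ M : ℝ, ∀ n : ℕ, varV μ n ≤ M) ∧
    (∃ M : ℝ, ∀ x : ℝ, 0 < x → specG μ x / x ^ 2 ≤ M) := by
  have hpi := Real.pi_pos
  have hvar : ∀ n : ℕ, 1 ≤ n → |varV μ n - 4 * Real.log n| ≤ 2*π^3 + 4*Real.log π + 14 :=
    fun n hn => by rw [varV_eq_aux μ hμ n]; exact key_aux n hn
  refine ⟨?_, ⟨2*π^3 + 4*Real.log π + 14, hvar⟩, ?_, ?_⟩
  · intro x hx
    rw [specG, measure_Icc_calc μ hμ hx.1, min_eq_left hx.2,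
      ENNReal.toReal_ofReal (by positivity)]
  · rintro ⟨M, hM⟩
    set C : ℝ := 2*π^3 + 4*Real.log π + 14 with hCdef
    set N : ℕ := ⌈Real.exp ((M + C + 1)/4)⌉₊ with hN
    have hN1 : 1 ≤ N := Nat.one_le_ceil_iff.mpr (Real.exp_pos _)
    have hNpos : (0:ℝ) < N := by
      have : (1:ℝ) ≤ N := by exact_mod_cast hN1
      linarith
    have hle : Real.exp ((M + C + 1)/4) ≤ N := Nat.le_ceil _
    have hlog : (M + C + 1)/4 ≤ Real.log N := by
      rw [Real.le_log_iff_exp_le hNpos]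
      exact hle
    have h1 := abs_le.mp (hvar N hN1)
    have h2 := hM N
    have := h1.1
    linarith
  · refine ⟨1, fun x hx => ?_⟩
    rw [specG, measure_Icc_calc μ hμ hx.le, ENNReal.toReal_ofReal (by positivity)]
    have hmin : min x π ≤ x := min_le_left _ _
    have hmin0 : 0 ≤ min x π := le_min hx.le hpi.le
    rw [div_le_one (by positivity)]
    nlinarith
end
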